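/- The monic eigenvector p_{2,q}^{(α,n)}(x) of T_{n,q,α} corresponding to λ_{2,q}^{(α,n)} equals x^2 - x for all n ≥ 2, all q > 0, and all α ∈ [0,1]. -/

import Mathlib

open Finset Filter Topology

/-- The q-integer `[m]_q = 1 + q + ... + q^{m-1}`, with `[0]_q = 0`. -/
noncomputable def qInt (q : ℝ) (m : ℕ) : ℝ := ∑ i ∈ Finset.range m, q ^ i

/-- The q-factorial `[n]_q! = [1]_q [2]_q ⋯ [n]_q`. -/
noncomputable def qFact (q : ℝ) (n : ℕ) : ℝ := ∏ i ∈ Finset.range n, qInt q (i + 1)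

/-- The q-binomial coefficient `[n]_q!/([k]_q! [n-k]_q!)` (zero if `k > n`). -/
noncomputable def qBinom (q : ℝ) (n k : ℕ) : ℝ :=
  if k ≤ n then qFact q n / (qFact q k * qFact q (n - k)) else 0

/-- The q-Stirling number of the second kind. -/
noncomputable def qStirling (q : ℝ) (k r : ℕ) : ℝ :=
  (1 / (qFact q r * q ^ (r * (r - 1) / 2))) *
    ∑ i ∈ Finset.range (r + 1),
      (-1 : ℝ) ^ i * q ^ (i * (i - 1) / 2) * qBinom q r i * (qInt q (r - i)) ^ k

/-- The q-forward difference operator on sequences: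
`Δ_q^0 f_i = f_i`, `Δ_q^{r+1} f_i = Δ_q^r f_{i+1} - q^r Δ_q^r f_i`. -/
noncomputable def qDiff (q : ℝ) : ℕ → (ℕ → ℝ) → ℕ → ℝ
  | 0, f, i => f i
  | r + 1, f, i => qDiff q r f (i + 1) - q ^ r * qDiff q r f i

/-- The eigenvalues `λ_{k,q}^{(α,n)}` of the (α,q)-Bernstein operator. -/
noncomputable def lamEig (q α : ℝ) (n k : ℕ) : ℝ :=
  q ^ (k * (k - 1) / 2) * qFact q (n - 2) / (qFact q (n - k) * (qInt q n) ^ k) *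
    ((1 - α) * qInt q (n - k) * qInt q (n - 1 + k) + α * qInt q n * qInt q (n - 1))

/-- The coefficients `a_{n,q}(r,k)` of `T_{n,q,α}(t^k; x) = Σ_r a_{n,q}(r,k) x^r`. -/
noncomputable def aCoef (q α : ℝ) (n r k : ℕ) : ℝ :=
  q ^ (r * (r - 1) / 2) * qFact q (n - 2) / ((qInt q n) ^ k * qFact q (n - r)) *
    ((1 - α) * qInt q (n - r) *
        (qInt q (n + r - 1) * qStirling q (k + 1) (r + 1) -
          qInt q (r + 1) * qInt q (n - 1) * qStirling q k (r + 1)) +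
      α * qInt q n * qInt q (n - 1) * qStirling q k r)

/-- The (α,q)-Bernstein operator, via its forward-difference representation
`T_{n,q,α}(f;x) = Σ_{r=0}^n ((1-α) C_q(n-1,r) Δ_q^r g_0 + α C_q(n,r) Δ_q^r f_0) x^r`,
where `f_i = f([i]_q/[n]_q)` and
`g_i = (1 - q^{n-i-1}[i]_q/[n-1]_q) f_i + (q^{n-i-1}[i]_q/[n-1]_q) f_{i+1}`. -/
noncomputable def Talpha (q α : ℝ) (n : ℕ) (f : ℝ → ℝ) (x : ℝ) : ℝ :=
  let fs : ℕ → ℝ := fun i => f (qInt q i / qInt q n)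
  let gs : ℕ → ℝ := fun i =>
    (1 - q ^ (n - i - 1) * qInt q i / qInt q (n - 1)) * fs i +
      (q ^ (n - i - 1) * qInt q i / qInt q (n - 1)) * fs (i + 1)
  ∑ r ∈ Finset.range (n + 1),
    ((1 - α) * qBinom q (n - 1) r * qDiff q r gs 0 + α * qBinom q n r * qDiff q r fs 0) * x ^ r

lemma qInt_zero (q : ℝ) : qInt q 0 = 0 := by simp [qInt]
lemma qInt_one (q : ℝ) : qInt q 1 = 1 := by simp [qInt]
lemma qInt_succ (q : ℝ) (m : ℕ) : qInt q (m+1) = q * qInt q m + 1 := by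
  simp [qInt, geom_sum_succ]

lemma qInt_pos {q : ℝ} (hq : 0 < q) {m : ℕ} (hm : 1 ≤ m) : 0 < qInt q m := by
  unfold qInt
  apply Finset.sum_pos (fun i _ => pow_pos hq i)
  exact Finset.nonempty_range_iff.mpr (by omega)

lemma pow_eq_qInt (q : ℝ) (m : ℕ) : q ^ m = (q - 1) * qInt q m + 1 := by
  induction m with
  | zero => simp [qInt_zero]
  | succ k ih => rw [pow_succ, qInt_succ]; linear_combination q * ih

lemma qFact_pos {q : ℝ} (hq : 0 < q) (n : ℕ) : 0 < qFact q n :=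
  Finset.prod_pos fun i _ => qInt_pos hq (Nat.succ_le_succ (Nat.zero_le i))

lemma qFact_zero (q : ℝ) : qFact q 0 = 1 := by simp [qFact]
lemma qFact_succ (q : ℝ) (n : ℕ) : qFact q (n+1) = qFact q n * qInt q (n+1) :=
  Finset.prod_range_succ _ _

lemma qBinom_zero {q : ℝ} (hq : 0 < q) (m : ℕ) : qBinom q m 0 = 1 := by
  unfold qBinom
  rw [if_pos (Nat.zero_le m), qFact_zero, Nat.sub_zero]
  field_simp [(qFact_pos hq m).ne']

lemma qBinom_one {q : ℝ} (hq : 0 < q) (m : ℕ) : qBinom q m 1 = qInt q m := by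
  unfold qBinom
  cases m with
  | zero => rw [if_neg (by omega)]; simp [qInt_zero]
  | succ k =>
    rw [if_pos (by omega)]
    have h1 : qFact q 1 = 1 := by rw [show (1:ℕ) = 0+1 from rfl, qFact_succ, qFact_zero, qInt_one]; ring
    rw [show k+1-1 = k from rfl, qFact_succ, h1]
    field_simp [(qFact_pos hq k).ne']

lemma qBinom_two {q : ℝ} (hq : 0 < q) (m : ℕ) :
    qBinom q m 2 = qInt q m * qInt q (m-1) / (1+q) := by
  unfold qBinom
  match m with
  | 0 => rw [if_neg (by omega)]; simp [qInt_zero]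
  | 1 => rw [if_neg (by omega)]; simp [qInt_zero]
  | (k+2) =>
    rw [if_pos (by omega)]
    have h2 : qFact q 2 = 1 + q := by
      rw [show (2:ℕ) = 1+1 from rfl, qFact_succ, show (1:ℕ) = 0+1 from rfl, qFact_succ,
        qFact_zero, qInt_one, qInt_succ, qInt_one]
      ring
    rw [show k+2-2 = k from rfl, show k+2-1 = k+1 from rfl, qFact_succ, qFact_succ, h2]
    have h1q : (1:ℝ) + q ≠ 0 := by positivity
    field_simp [(qFact_pos hq k).ne']

lemma qDiff_zero' (q : ℝ) (f : ℕ → ℝ) (i : ℕ) : qDiff q 0 f i = f i := rfl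
lemma qDiff_succ (q : ℝ) (r : ℕ) (f : ℕ → ℝ) (i : ℕ) :
    qDiff q (r+1) f i = qDiff q r f (i+1) - q^r * qDiff q r f i := rfl

lemma qDiff_congr (q : ℝ) (r : ℕ) (f g : ℕ → ℝ) :
    ∀ i, (∀ j, j ≤ r → f (i+j) = g (i+j)) → qDiff q r f i = qDiff q r g i := by
  induction r with
  | zero => intro i h; have := h 0 le_rfl; simpa [qDiff] using this
  | succ r ih =>
    intro i h
    rw [qDiff_succ, qDiff_succ, ih (i+1) (fun j hj => by
        rw [show i+1+j = i+(j+1) by omega]; exact h (j+1) (by omega)),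
      ih i (fun j hj => h j (by omega))]

lemma quad_qdiff3 (q a b : ℝ) (i : ℕ) :
    qDiff q 3 (fun j => a * (qInt q j)^2 + b * qInt q j) i = 0 := by
  simp only [qDiff]
  rw [show i+1+1+1 = (i+1+1)+1 from rfl, qInt_succ q (i+1+1), qInt_succ q (i+1), qInt_succ q i]
  ring

lemma quad_qdiff_ge3 (q a b : ℝ) {r : ℕ} (hr : 3 ≤ r) (i : ℕ) :
    qDiff q r (fun j => a * (qInt q j)^2 + b * qInt q j) i = 0 := by
  obtain ⟨k, rfl⟩ : ∃ k, r = 3 + k := ⟨r - 3, by omega⟩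
  induction k generalizing i with
  | zero => exact quad_qdiff3 q a b i
  | succ k ih =>
    rw [show 3+(k+1) = (3+k)+1 from rfl, qDiff_succ, ih (i+1) (by omega), ih i (by omega)]
    ring

lemma gs_alg (q M Q P t A B : ℝ) (hM : M ≠ 0) (hP : P ≠ 0) (hPe : P = (q-1)*t+1) :
    (1 - Q / P * t / M) * (A*t^2 + B*t) + (Q / P * t / M) * (A*(q*t+1)^2 + B*(q*t+1))
      = (A*(1 + Q*(q+1)/M)) * t^2 + (B + Q*(A+B)/M) * t := by
  subst hPe
  field_simp
  ring

noncomputable def fseq (q : ℝ) (n : ℕ) (i : ℕ) : ℝ :=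
  (qInt q i / qInt q n) ^ 2 - qInt q i / qInt q n

noncomputable def gseq (q : ℝ) (n : ℕ) (i : ℕ) : ℝ :=
  (1 - q ^ (n - i - 1) * qInt q i / qInt q (n - 1)) * fseq q n i +
    (q ^ (n - i - 1) * qInt q i / qInt q (n - 1)) * fseq q n (i + 1)


theorem eigenvector_k2 (q α : ℝ) (hq : 0 < q) (hα : α ∈ Set.Icc (0 : ℝ) 1)
    (n : ℕ) (hn : 2 ≤ n) :
    ∀ x : ℝ, Talpha q α n (fun t => t ^ 2 - t) x = lamEig q α n 2 * (x ^ 2 - x) := by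
  obtain ⟨m, rfl⟩ : ∃ m, n = m + 2 := ⟨n - 2, by omega⟩
  intro x
  have hN : qInt q (m+2) ≠ 0 := (qInt_pos hq (by omega)).ne'
  have hM : qInt q (m+1) ≠ 0 := (qInt_pos hq (by omega)).ne'
  have h1q : (1:ℝ) + q ≠ 0 := by positivity
  have hFm : qFact q m ≠ 0 := (qFact_pos hq m).ne'
  set A : ℝ := 1 / (qInt q (m+2))^2 with hA
  set B : ℝ := -(1 / qInt q (m+2)) with hB
  set a' : ℝ := A * (1 + q^(m+1)*(q+1)/qInt q (m+1)) with ha'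
  set b' : ℝ := B + q^(m+1)*(A+B)/qInt q (m+1) with hb'
  have hfsq : ∀ i, fseq q (m+2) i = A * (qInt q i)^2 + B * qInt q i := by
    intro i
    unfold fseq
    rw [hA, hB]
    field_simp
    ring
  have hgsq : ∀ i, i ≤ m+1 → gseq q (m+2) i = a' * (qInt q i)^2 + b' * qInt q i := by
    intro i hi
    unfold gseq
    rw [hfsq, hfsq, qInt_succ q i, show m+2-i-1 = m+1-i by omega,
      show m+2-1 = m+1 from rfl, pow_sub₀ q hq.ne' (show i ≤ m+1 by omega), ha', hb']
    exact gs_alg q (qInt q (m+1)) (q^(m+1)) (q^i) (qInt q i) A B hM (pow_pos hq i).ne'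
      (pow_eq_qInt q i)
  have hTal : Talpha q α (m+2) (fun t => t^2 - t) x
      = ∑ r ∈ Finset.range (m+3),
          ((1-α) * qBinom q (m+1) r * qDiff q r (gseq q (m+2)) 0
            + α * qBinom q (m+2) r * qDiff q r (fseq q (m+2)) 0) * x ^ r := rfl
  rw [hTal]
  rw [← Finset.sum_subset (Finset.range_subset_range.mpr (show 3 ≤ m+3 by omega)) (by
    intro r hr hr3
    simp only [Finset.mem_range] at hr hr3
    have h3 : 3 ≤ r := by omega
    have hfz : qDiff q r (fseq q (m+2)) 0 = 0 := by
      rw [qDiff_congr q r _ (fun j => A * (qInt q j)^2 + B * qInt q j) 0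
        (fun j _ => hfsq (0+j))]
      exact quad_qdiff_ge3 q A B h3 0
    rcases Nat.lt_or_ge r (m+2) with hrm | hrm
    · have hgz : qDiff q r (gseq q (m+2)) 0 = 0 := by
        rw [qDiff_congr q r _ (fun j => a' * (qInt q j)^2 + b' * qInt q j) 0
          (fun j hj => hgsq (0+j) (by omega))]
        exact quad_qdiff_ge3 q a' b' h3 0
      rw [hfz, hgz]
      ring
    · have hb0 : qBinom q (m+1) r = 0 := by
        unfold qBinom
        rw [if_neg (by omega)]
      rw [hfz, hb0]
      ring)]
  rw [Finset.sum_range_succ, Finset.sum_range_succ, Finset.sum_range_succ,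
    Finset.sum_range_zero]
  have d0f : qDiff q 0 (fseq q (m+2)) 0 = 0 := by
    show fseq q (m+2) 0 = 0
    rw [hfsq, qInt_zero]
    ring
  have d0g : qDiff q 0 (gseq q (m+2)) 0 = 0 := by
    show gseq q (m+2) 0 = 0
    rw [hgsq 0 (by omega), qInt_zero]
    ring
  have d1f : qDiff q 1 (fseq q (m+2)) 0 = A + B := by
    simp only [qDiff]
    rw [hfsq, hfsq]
    simp only [qInt_succ, qInt_zero]
    ring
  have d1g : qDiff q 1 (gseq q (m+2)) 0 = a' + b' := by
    simp only [qDiff]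
    rw [hgsq (0+1) (by omega), hgsq 0 (by omega)]
    simp only [qInt_succ, qInt_zero]
    ring
  have d2f : qDiff q 2 (fseq q (m+2)) 0 = q*(1+q)*A := by
    simp only [qDiff]
    rw [hfsq, hfsq, hfsq]
    simp only [qInt_succ, qInt_zero]
    ring
  have hlam : lamEig q α (m+2) 2 = q * qFact q m / (qFact q m * (qInt q (m+2))^2) *
      ((1-α) * qInt q m * qInt q (m+3) + α * qInt q (m+2) * qInt q (m+1)) := by
    unfold lamEig
    rw [show m+2-1 = m+1 from rfl, show m+2-2 = m from rfl, show m+1+2 = m+3 from rfl,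
      show 2*(2-1)/2 = 1 from rfl, pow_one]
  have e3 : qInt q (m+3) = q * qInt q (m+2) + 1 := qInt_succ q (m+2)
  have e2 : qInt q (m+2) = q * qInt q (m+1) + 1 := qInt_succ q (m+1)
  have e1 : qInt q (m+1) = q * qInt q m + 1 := qInt_succ q m
  have epow : q^(m+1) = q * ((q-1) * qInt q m + 1) := by
    rw [pow_succ, pow_eq_qInt q m]
    ring
  have hlam' : lamEig q α (m+2) 2 = q / (qInt q (m+2))^2 *
      ((1-α) * qInt q m * qInt q (m+3) + α * qInt q (m+2) * qInt q (m+1)) := by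
    rw [hlam]
    field_simp
  have hc1 : (1-α) * qInt q (m+1) * (a'+b') + α * qInt q (m+2) * (A+B)
      = -(q / (qInt q (m+2))^2 *
          ((1-α) * qInt q m * qInt q (m+3) + α * qInt q (m+2) * qInt q (m+1))) := by
    rw [ha', hb', hA, hB]
    field_simp
    rw [e3, e2, e1, epow]
    ring
  have hc2 : (1-α) * (qInt q (m+1) * qInt q m / (1+q)) * (q*(1+q)*a')
        + α * (qInt q (m+2) * qInt q (m+1) / (1+q)) * (q*(1+q)*A)
      = q / (qInt q (m+2))^2 *
          ((1-α) * qInt q m * qInt q (m+3) + α * qInt q (m+2) * qInt q (m+1)) := by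
    rw [ha', hA]
    field_simp
    rw [e3, e2, e1, epow]
    ring
  rw [hlam', d0f, d0g, d1f, d1g, d2f, qBinom_zero hq (m+1), qBinom_zero hq (m+2),
    qBinom_one hq (m+1), qBinom_one hq (m+2), qBinom_two hq (m+2),
    show m+2-1 = m+1 from rfl]
  rcases Nat.eq_zero_or_pos m with hm0 | hm1
  · subst hm0
    have hb12 : qBinom q (0+1) 2 = 0 := by
      unfold qBinom
      rw [if_neg (by omega)]
    rw [hb12]
    rw [qInt_zero] at hc1 hc2 ⊢
    linear_combination hc1 * x + hc2 * x^2
  · have d2g : qDiff q 2 (gseq q (m+2)) 0 = q*(1+q)*a' := by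
      simp only [qDiff]
      rw [hgsq (0+1+1) (by omega), hgsq (0+1) (by omega), hgsq 0 (by omega)]
      simp only [qInt_succ, qInt_zero]
      ring
    rw [d2g, qBinom_two hq (m+1), show m+1-1 = m from rfl]
    linear_combination hc1 * x + hc2 * x^2
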